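/- For symmetric positive definite A₁, A₂ and all t ∈ [0,1], the matrix γ(t) = (1−t)²A₁ + t(1−t)[(A₁A₂)^{1/2} + (A₂A₁)^{1/2}] + t²A₂ is symmetric positive definite. -/

import Mathlib

open Matrix

section Aux
variable {n : ℕ}

lemma aux_smul_posDef {A : Matrix (Fin n) (Fin n) ℝ} (hA : A.PosDef) {c : ℝ} (hc : 0 < c) :
    (c • A).PosDef := by
  refine Matrix.PosDef.of_dotProduct_mulVec_pos (by rw [Matrix.IsHermitian, Matrix.conjTranspose_smul, star_trivial, hA.1.eq]) fun x hx => ?_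
  rw [smul_mulVec, dotProduct_smul, smul_eq_mul]
  exact mul_pos hc (hA.dotProduct_mulVec_pos hx)

lemma aux_smul_posSemidef {A : Matrix (Fin n) (Fin n) ℝ} (hA : A.PosSemidef) {c : ℝ}
    (hc : 0 ≤ c) : (c • A).PosSemidef := by
  refine Matrix.PosSemidef.of_dotProduct_mulVec_nonneg (by rw [Matrix.IsHermitian, Matrix.conjTranspose_smul, star_trivial, hA.1.eq]) fun x => ?_
  rw [smul_mulVec, dotProduct_smul, smul_eq_mul]
  exact mul_nonneg hc (hA.dotProduct_mulVec_nonneg x)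

lemma aux_conj_posDef {A B : Matrix (Fin n) (Fin n) ℝ} (hA : A.PosDef) (hB : IsUnit B) :
    (Bᴴ * A * B).PosDef := by
  refine Matrix.PosDef.of_dotProduct_mulVec_pos (Matrix.isHermitian_conjTranspose_mul_mul B hA.1) fun x hx => ?_
  have hinj := Matrix.mulVec_injective_iff_isUnit.mpr hB
  have hBx : B *ᵥ x ≠ 0 := fun h => hx (hinj (by simpa using h))
  simpa only [star_mulVec, dotProduct_mulVec, vecMul_vecMul] using hA.dotProduct_mulVec_pos hBx

lemma aux_conj_posDef' {A B : Matrix (Fin n) (Fin n) ℝ} (hA : A.PosDef) (hB : IsUnit B) :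
    (B * A * Bᴴ).PosDef := by
  have hBH : IsUnit Bᴴ := by
    rw [Matrix.isUnit_iff_isUnit_det] at hB ⊢
    simpa [Matrix.det_conjTranspose] using hB
  simpa using aux_conj_posDef hA hBH

end Aux

theorem wasserstein_geodesic_posDef {n : ℕ} (A₁ A₂ S1 N : Matrix (Fin n) (Fin n) ℝ)
    (hA₁ : A₁.PosDef) (hA₂ : A₂.PosDef)
    (hS1 : S1.PosDef) (hS1sq : S1 * S1 = A₁)
    (hN : N.PosDef) (hNsq : N * N = S1 * A₂ * S1) :
    ∀ t : ℝ, t ∈ Set.Icc (0:ℝ) 1 →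
      ((1 - t)^2 • A₁
        + (t * (1 - t)) • ((S1 * N * S1⁻¹) + (S1 * N * S1⁻¹)ᵀ)
        + t^2 • A₂).PosDef := by
  intro t ht
  obtain ⟨ht0, ht1⟩ := ht
  have hdet : IsUnit S1.det := hS1.det_pos.ne'.isUnit
  have hS1i : S1 * S1⁻¹ = 1 := Matrix.mul_nonsing_inv _ hdet
  have hiS1 : S1⁻¹ * S1 = 1 := Matrix.nonsing_inv_mul _ hdet
  have hS1sym : S1ᵀ = S1 := by
    rw [← Matrix.conjTranspose_eq_transpose_of_trivial]; exact hS1.isHermitian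
  have hNsym : Nᵀ = N := by
    rw [← Matrix.conjTranspose_eq_transpose_of_trivial]; exact hN.isHermitian
  have hiS1sym : (S1⁻¹)ᵀ = S1⁻¹ := by
    rw [Matrix.transpose_nonsing_inv, hS1sym]
  set T : Matrix (Fin n) (Fin n) ℝ := S1⁻¹ * N * S1⁻¹ with hT
  have hTsym : Tᵀ = T := by
    simp [hT, Matrix.transpose_mul, hNsym, hiS1sym, Matrix.mul_assoc]
  have hTpd : T.PosDef := by
    have := aux_conj_posDef' hN hS1.inv.isUnit
    rwa [show (S1⁻¹)ᴴ = S1⁻¹ by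
      rw [Matrix.conjTranspose_eq_transpose_of_trivial, hiS1sym]] at this
  -- key products
  have hA1T : A₁ * T = S1 * N * S1⁻¹ := by
    rw [← hS1sq, hT]
    calc S1 * S1 * (S1⁻¹ * N * S1⁻¹) = S1 * (S1 * S1⁻¹) * N * S1⁻¹ := by
          simp [Matrix.mul_assoc]
      _ = S1 * N * S1⁻¹ := by rw [hS1i]; simp [Matrix.mul_assoc]
  have hTA1 : T * A₁ = S1⁻¹ * N * S1 := by
    rw [← hS1sq, hT]
    calc S1⁻¹ * N * S1⁻¹ * (S1 * S1) = S1⁻¹ * N * (S1⁻¹ * S1) * S1 := by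
          simp [Matrix.mul_assoc]
      _ = S1⁻¹ * N * S1 := by rw [hiS1]; simp [Matrix.mul_assoc]
  have hTA1T : T * A₁ * T = A₂ := by
    rw [hTA1, hT]
    calc S1⁻¹ * N * S1 * (S1⁻¹ * N * S1⁻¹)
        = S1⁻¹ * N * (S1 * S1⁻¹) * N * S1⁻¹ := by simp [Matrix.mul_assoc]
      _ = S1⁻¹ * (N * N) * S1⁻¹ := by rw [hS1i]; simp [Matrix.mul_assoc]
      _ = S1⁻¹ * (S1 * A₂ * S1) * S1⁻¹ := by rw [hNsq]
      _ = (S1⁻¹ * S1) * A₂ * (S1 * S1⁻¹) := by simp [Matrix.mul_assoc]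
      _ = A₂ := by rw [hS1i, hiS1]; simp
  have hTrT : (S1 * N * S1⁻¹)ᵀ = S1⁻¹ * N * S1 := by
    simp [Matrix.transpose_mul, hNsym, hiS1sym, hS1sym, Matrix.mul_assoc]
  set M : Matrix (Fin n) (Fin n) ℝ := (1 - t) • 1 + t • T with hM
  have hMpd : M.PosDef := by
    rcases eq_or_lt_of_le ht0 with h0 | h0
    · rw [hM, ← h0]; simpa using Matrix.PosDef.one
    · exact Matrix.PosDef.posSemidef_add
        (aux_smul_posSemidef Matrix.PosSemidef.one (by linarith))
        (aux_smul_posDef hTpd h0)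
  have hMsym : Mᵀ = M := by
    simp [hM, Matrix.transpose_add, Matrix.transpose_smul, hTsym]
  have key : (1 - t)^2 • A₁
        + (t * (1 - t)) • ((S1 * N * S1⁻¹) + (S1 * N * S1⁻¹)ᵀ)
        + t^2 • A₂ = M * A₁ * Mᴴ := by
    rw [Matrix.conjTranspose_eq_transpose_of_trivial, hMsym, hM]
    rw [hTrT]
    simp only [Matrix.add_mul, Matrix.mul_add, Matrix.smul_mul, Matrix.mul_smul,
      Matrix.one_mul, Matrix.mul_one, smul_smul, hA1T, hTA1, hTA1T,
      ← Matrix.mul_assoc]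
    rw [show S1⁻¹ * N * S1 * T = A₂ by rw [← hTA1]; exact hTA1T]
    module
  rw [key]
  exact aux_conj_posDef' hA₁ hMpd.isUnit
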